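/- arXiv:math/0606726 — 2 statements merged into one kernel-verified Lean document; each statement's English description precedes it below -/
import Mathlib

section
/- Let σ = u x z v and σ' = u z x v be permutations of X (as standard words) with x < z, where v contains no letter y with x < y < z. Then the triangulations φ(σ) and φ(σ') differ by exactly one diagonal flip. -/
open scoped Classical

/-- `d` is a diagonal of the convex `(n+2)`-gon with vertices `0,…,n+1`
(in clockwise increasing order): it joins two nonadjacent vertices. -/
def IsDiagonal (n : ℕ) (d : ℕ × ℕ) : Prop :=
  d.1 < d.2 ∧ d.2 ≤ n + 1 ∧ d.2 ≠ d.1 + 1 ∧ ¬(d.1 = 0 ∧ d.2 = n + 1)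

/-- Two diagonals of a convex polygon cross. -/
def Crosses (d e : ℕ × ℕ) : Prop :=
  (d.1 < e.1 ∧ e.1 < d.2 ∧ d.2 < e.2) ∨ (e.1 < d.1 ∧ d.1 < e.2 ∧ e.2 < d.2)

/-- A triangulation of the convex `(n+2)`-gon: `n-1` pairwise noncrossing diagonals. -/
def IsTriangulation (n : ℕ) (D : Finset (ℕ × ℕ)) : Prop :=
  (∀ d ∈ D, IsDiagonal n d) ∧ (∀ d ∈ D, ∀ e ∈ D, ¬ Crosses d e) ∧ D.card = n - 1

/-- `{a,b}` (with `a<b`) is an edge of the triangulation `D`: a polygon side or a diagonal. -/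
def IsEdge (n : ℕ) (D : Finset (ℕ × ℕ)) (a b : ℕ) : Prop :=
  a < b ∧ b ≤ n + 1 ∧ (b = a + 1 ∨ (a = 0 ∧ b = n + 1) ∨ (a, b) ∈ D)

/-- `{a,b,c}` (with `a<b<c`) is a (triangular) face of the triangulation `D`. -/
def IsFace (n : ℕ) (D : Finset (ℕ × ℕ)) (a b c : ℕ) : Prop :=
  a < b ∧ b < c ∧ IsEdge n D a b ∧ IsEdge n D b c ∧ IsEdge n D a c

/-- An ear of a triangulation: a vertex incident to no diagonal. -/
def IsEar (n : ℕ) (D : Finset (ℕ × ℕ)) (v : ℕ) : Prop :=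
  v ≤ n + 1 ∧ ∀ d ∈ D, d.1 ≠ v ∧ d.2 ≠ v

/-- Degree of a vertex: number of edges (polygon sides and diagonals) incident to it. -/
noncomputable def degreeOf (n : ℕ) (D : Finset (ℕ × ℕ)) (v : ℕ) : ℕ :=
  ((Finset.range (n + 2)).filter (fun w => w ≠ v ∧ IsEdge n D (min v w) (max v w))).card

/-- The set of faces of a triangulation, as increasing triples. -/
noncomputable def facesSet (n : ℕ) (D : Finset (ℕ × ℕ)) : Finset (ℕ × ℕ × ℕ) :=
  (Finset.range (n + 2) ×ˢ Finset.range (n + 2) ×ˢ Finset.range (n + 2)).filter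
    (fun t => IsFace n D t.1 t.2.1 t.2.2)

/-- Predecessor of `v` in the vertex set `Y`. -/
def predIn (Y : Finset ℕ) (v : ℕ) : ℕ := (Y.filter (· < v)).max.unbotD 0
/-- Successor of `v` in the vertex set `Y`. -/
def succIn (Y : Finset ℕ) (v : ℕ) : ℕ := (Y.filter (v < ·)).min.untopD 0

/-- The iterative neighbor-joining construction: for each successive letter,
join its two current neighbors by a diagonal and delete the letter's vertex. -/
def phiAux : List ℕ → Finset ℕ → Finset (ℕ × ℕ)
  | [], _ => ∅
  | [_], _ => ∅
  | v :: rest, Y => insert (predIn Y v, succIn Y v) (phiAux rest (Y.erase v))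

/-- The map `φ` from permutations (standard words, letters `1,…,n`) to
triangulations of the `(n+2)`-gon with vertices `0,…,n+1`. -/
def phiT (n : ℕ) (l : List ℕ) : Finset (ℕ × ℕ) := phiAux l (Finset.range (n + 2))

/-- `t` is the third vertex of a face of `D` containing the polygon side `{i, i+1}`. -/
def FaceOnEdge (n : ℕ) (D : Finset (ℕ × ℕ)) (i t : ℕ) : Prop :=
  (t < i ∧ IsFace n D t i (i + 1)) ∨ (i + 1 < t ∧ IsFace n D i (i + 1) t)

/-- `D` and `D'` differ by one diagonal flip, in the quadrilateral `a<b<c<d`. -/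
def FlipAdj (n : ℕ) (D D' : Finset (ℕ × ℕ)) : Prop :=
  ∃ a b c d : ℕ, a < b ∧ b < c ∧ c < d ∧
    ((IsFace n D a b d ∧ IsFace n D b c d ∧ D' = insert (a, c) (D.erase (b, d))) ∨
     (IsFace n D a b c ∧ IsFace n D a c d ∧ D' = insert (b, d) (D.erase (a, c))))

/-- Sylvester adjacency: `u x z u' y u'' ~ u z x u' y u''` with `x ≤ y < z`. -/
def SylvAdj (w1 w2 : List ℕ) : Prop :=
  ∃ (u u' u'' : List ℕ) (x y z : ℕ), x ≤ y ∧ y < z ∧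
    w1 = u ++ x :: z :: (u' ++ y :: u'') ∧ w2 = u ++ z :: x :: (u' ++ y :: u'')

/-- Sylvester congruence: the equivalence relation generated by sylvester adjacency. -/
def SylvCong : List ℕ → List ℕ → Prop := Relation.EqvGen SylvAdj

/-- Standardization of a word: replace the occurrences of the smallest letter,
left to right, by `1, 2, …`, then continue with the next letter, etc. -/
def stdW (w : List ℕ) : List ℕ :=
  (List.range w.length).map (fun i =>
    (((List.range w.length).filter (fun j =>
      w.getD j 0 < w.getD i 0 ∨ (w.getD j 0 = w.getD i 0 ∧ j < i))).length) + 1)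

/-- Partial sums of an evaluation `μ`. -/
def Msum (μ : ℕ → ℕ) (s : ℕ) : ℕ := ∑ t ∈ Finset.range s, μ t

/-- The color (block index) of the vertex `i` for the increasing coloring `ε_μ`. -/
noncomputable def colOf (μ : ℕ → ℕ) (p i : ℕ) : ℕ :=
  ((Finset.range p).filter (fun s => Msum μ (s + 1) < i)).card

/-- `D`, colored by the increasing coloring `ε_μ`, is a simple colored triangulation. -/
def SimpleFor (n p : ℕ) (μ : ℕ → ℕ) (D : Finset (ℕ × ℕ)) : Prop :=
  IsTriangulation n D ∧
  (∀ d ∈ D, 1 ≤ d.1 → d.2 ≤ n → colOf μ p d.1 ≠ colOf μ p d.2) ∧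
  (∀ i t, 1 ≤ i → i + 1 ≤ n → colOf μ p i = colOf μ p (i + 1) →
    FaceOnEdge n D i t → t < i)

/-- Switched flip: a diagonal flip (preserving vertex colors) whose two adjacent
faces (with middle vertices `b` and `c`) have different colors. -/
def SwFlipAdj (n p : ℕ) (μ : ℕ → ℕ) (D D' : Finset (ℕ × ℕ)) : Prop :=
  ∃ a b c d : ℕ, a < b ∧ b < c ∧ c < d ∧ colOf μ p b ≠ colOf μ p c ∧
    ((IsFace n D a b d ∧ IsFace n D b c d ∧ D' = insert (a, c) (D.erase (b, d))) ∨
     (IsFace n D a b c ∧ IsFace n D a c d ∧ D' = insert (b, d) (D.erase (a, c))))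

lemma phiAux_cons (w b : ℕ) (l : List ℕ) (Y : Finset ℕ) :
    phiAux (w :: b :: l) Y = insert (predIn Y w, succIn Y w) (phiAux (b :: l) (Y.erase w)) := rfl

lemma phiAux_cons' (w : ℕ) (l : List ℕ) (hl : l ≠ []) (Y : Finset ℕ) :
    phiAux (w :: l) Y = insert (predIn Y w, succIn Y w) (phiAux l (Y.erase w)) := by
  match l, hl with
  | b :: t, _ => rfl

lemma predIn_spec {Y : Finset ℕ} {v : ℕ} (h : (Y.filter (· < v)).Nonempty) :
    predIn Y v ∈ Y ∧ predIn Y v < v ∧ ∀ q ∈ Y, q < v → q ≤ predIn Y v := by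
  have h1 : predIn Y v = (Y.filter (· < v)).max' h := by
    unfold predIn; rw [← Finset.coe_max' h]; rfl
  have hm := (Y.filter (· < v)).max'_mem h
  rw [h1]
  exact ⟨(Finset.mem_filter.1 hm).1, (Finset.mem_filter.1 hm).2,
    fun q hq hqv => Finset.le_max' (Y.filter (· < v)) q (Finset.mem_filter.2 ⟨hq, hqv⟩)⟩

lemma succIn_spec {Y : Finset ℕ} {v : ℕ} (h : (Y.filter (v < ·)).Nonempty) :
    succIn Y v ∈ Y ∧ v < succIn Y v ∧ ∀ q ∈ Y, v < q → succIn Y v ≤ q := by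
  have h1 : succIn Y v = (Y.filter (v < ·)).min' h := by
    unfold succIn; rw [← Finset.coe_min' h]; rfl
  have hm := (Y.filter (v < ·)).min'_mem h
  rw [h1]
  exact ⟨(Finset.mem_filter.1 hm).1, (Finset.mem_filter.1 hm).2,
    fun q hq hqv => Finset.min'_le (Y.filter (v < ·)) q (Finset.mem_filter.2 ⟨hq, hqv⟩)⟩

lemma predIn_eq {Y : Finset ℕ} {v p : ℕ} (hp : p ∈ Y) (hpv : p < v)
    (hmax : ∀ q ∈ Y, q < v → q ≤ p) : predIn Y v = p := by
  have h : (Y.filter (· < v)).Nonempty := ⟨p, Finset.mem_filter.2 ⟨hp, hpv⟩⟩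
  obtain ⟨h1, h2, h3⟩ := predIn_spec h
  exact le_antisymm (hmax _ h1 h2) (h3 p hp hpv)

lemma succIn_eq {Y : Finset ℕ} {v s : ℕ} (hs : s ∈ Y) (hvs : v < s)
    (hmin : ∀ q ∈ Y, v < q → s ≤ q) : succIn Y v = s := by
  have h : (Y.filter (v < ·)).Nonempty := ⟨s, Finset.mem_filter.2 ⟨hs, hvs⟩⟩
  obtain ⟨h1, h2, h3⟩ := succIn_spec h
  exact le_antisymm (h3 s hs hvs) (hmin _ h1 h2)

lemma succIn_pos_spec {Y : Finset ℕ} {v : ℕ} (h : 0 < succIn Y v) :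
    succIn Y v ∈ Y ∧ v < succIn Y v ∧ ∀ q ∈ Y, v < q → succIn Y v ≤ q := by
  by_cases hne : (Y.filter (v < ·)).Nonempty
  · exact succIn_spec hne
  · exfalso
    rw [Finset.not_nonempty_iff_eq_empty] at hne
    simp [succIn, hne] at h

lemma succIn_ne {Y : Finset ℕ} {v z : ℕ} (hz : z ∉ Y) (hz0 : z ≠ 0) : succIn Y v ≠ z := by
  intro h
  have h0 : 0 < succIn Y v := by omega
  obtain ⟨h1, _, _⟩ := succIn_pos_spec h0
  rw [h] at h1; exact hz h1

lemma not_mem_phiAux_snd {z : ℕ} (hz0 : z ≠ 0) :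
    ∀ (l : List ℕ) (Y : Finset ℕ), z ∉ Y → ∀ p, (p, z) ∉ phiAux l Y := by
  intro l
  induction l with
  | nil => intro Y _ p; simp [phiAux]
  | cons w t ih =>
    intro Y hzY p
    match t with
    | [] => simp [phiAux]
    | b :: t' =>
      rw [phiAux_cons]
      intro hmem
      rcases Finset.mem_insert.1 hmem with h | h
      · have h2 : z = succIn Y w := (Prod.ext_iff.1 h).2
        exact succIn_ne hzY hz0 h2.symm
      · exact ih _ (fun hc => hzY (Finset.mem_of_mem_erase hc)) p h

lemma mem_eraseL (u : List ℕ) : ∀ (Y : Finset ℕ) (m : ℕ),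
    m ∈ u.foldl Finset.erase Y ↔ m ∈ Y ∧ m ∉ u := by
  induction u with
  | nil => simp
  | cons w u ih =>
    intro Y m
    rw [List.foldl_cons, ih, Finset.mem_erase]
    simp only [List.mem_cons]
    tauto

def GoodP (Y : Finset ℕ) (D : Finset (ℕ × ℕ)) : Prop :=
  ∀ p s, p ∈ Y → s ∈ Y → p < s → (∀ w ∈ Y, ¬(p < w ∧ w < s)) → s = p + 1 ∨ (p, s) ∈ D

lemma good_base (n : ℕ) (D : Finset (ℕ × ℕ)) : GoodP (Finset.range (n + 2)) D := by
  intro p s hp hs hps hgap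
  left
  by_contra hne
  have hp1 : p + 1 ∈ Finset.range (n + 2) := by
    rw [Finset.mem_range] at hs ⊢; omega
  exact hgap (p + 1) hp1 ⟨by omega, by omega⟩

lemma good_erase {Y : Finset ℕ} {D : Finset (ℕ × ℕ)} {w : ℕ}
    (hG : GoodP Y D) (hD : (predIn Y w, succIn Y w) ∈ D) : GoodP (Y.erase w) D := by
  intro p s hp hs hps hgap
  have hp' := Finset.mem_of_mem_erase hp
  have hs' := Finset.mem_of_mem_erase hs
  by_cases hgap' : ∀ q ∈ Y, ¬(p < q ∧ q < s)
  · exact hG p s hp' hs' hps hgap'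
  · push_neg at hgap'
    obtain ⟨q, hqY, hq1, hq2⟩ := hgap'
    have hqw : q = w := by
      by_contra hne
      exact hgap q (Finset.mem_erase.2 ⟨hne, hqY⟩) ⟨hq1, hq2⟩
    subst hqw
    have hpred : predIn Y q = p := by
      apply predIn_eq hp' hq1
      intro m hm hmq
      by_contra hc
      push_neg at hc
      have hmne : m ≠ q := by omega
      exact hgap m (Finset.mem_erase.2 ⟨hmne, hm⟩) ⟨hc, by omega⟩
    have hsucc : succIn Y q = s := by
      apply succIn_eq hs' hq2
      intro m hm hqm
      by_contra hc
      push_neg at hc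
      have hmne : m ≠ q := by omega
      exact hgap m (Finset.mem_erase.2 ⟨hmne, hm⟩) ⟨by omega, hc⟩
    right
    rw [← hpred, ← hsucc]
    exact hD

lemma phiAux_suffix_subset (rest : List ℕ) : ∀ (u : List ℕ) (Y : Finset ℕ),
    phiAux rest (u.foldl Finset.erase Y) ⊆ phiAux (u ++ rest) Y := by
  intro u
  induction u with
  | nil => intro Y; simp
  | cons w u ih =>
    intro Y
    rw [List.foldl_cons, List.cons_append]
    cases h : u ++ rest with
    | nil =>
      have : rest = [] := by
        rcases List.append_eq_nil_iff.1 h with ⟨_, h2⟩; exact h2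
      subst this
      simp [phiAux]
    | cons b t =>
      rw [phiAux_cons, ← h]
      exact (ih (Y.erase w)).trans (Finset.subset_insert _ _)

lemma good_chain {T : Finset (ℕ × ℕ)} (rest : List ℕ) (hr : rest ≠ []) :
    ∀ (u : List ℕ) (Y : Finset ℕ), GoodP Y T → phiAux (u ++ rest) Y ⊆ T →
      GoodP (u.foldl Finset.erase Y) T := by
  intro u
  induction u with
  | nil => intro Y hG _; simpa using hG
  | cons w u ih =>
    intro Y hG hsub
    rw [List.foldl_cons]
    have hne : u ++ rest ≠ [] := by
      intro hc; rcases List.append_eq_nil_iff.1 hc with ⟨_, h2⟩; exact hr h2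
    rw [List.cons_append, phiAux_cons' w _ hne] at hsub
    have hpair : (predIn Y w, succIn Y w) ∈ T := hsub (Finset.mem_insert_self _ _)
    exact ih (Y.erase w) (good_erase hG hpair)
      ((Finset.subset_insert _ _).trans hsub)

lemma key_eq (v : List ℕ) (x z a d : ℕ) (hax : a < x) (hxz : x < z) :
    ∀ (u : List ℕ) (Y : Finset ℕ), x ∈ Y → x ∉ u →
      phiAux (z :: x :: v) (u.foldl Finset.erase Y) =
        insert (x, d) ((phiAux (x :: z :: v) (u.foldl Finset.erase Y)).erase (a, z)) →
      phiAux (u ++ z :: x :: v) Y =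
        insert (x, d) ((phiAux (u ++ x :: z :: v) Y).erase (a, z)) := by
  intro u
  induction u with
  | nil => intro Y _ _ H0; simpa using H0
  | cons w u ih =>
    intro Y hxY hxu H0
    have hxw : x ≠ w := by intro h; exact hxu (h ▸ List.mem_cons_self)
    have hxu' : x ∉ u := fun h => hxu (List.mem_cons_of_mem _ h)
    rw [List.foldl_cons] at H0
    have hne : (predIn Y w, succIn Y w) ≠ (a, z) := by
      intro h
      have h1 : predIn Y w = a := (Prod.ext_iff.1 h).1
      have h2 : succIn Y w = z := (Prod.ext_iff.1 h).2
      have hz0 : 0 < succIn Y w := by omega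
      obtain ⟨_, hwlt, hmin⟩ := succIn_pos_spec hz0
      rw [h2] at hwlt hmin
      have hxw' : x < w := by
        rcases lt_or_ge w x with hc | hc
        · exact absurd (hmin x hxY hc) (by omega)
        · omega
      have := (predIn_spec (⟨x, Finset.mem_filter.2 ⟨hxY, hxw'⟩⟩ :
        (Y.filter (· < w)).Nonempty)).2.2 x hxY hxw'
      omega
    have h1 : phiAux ((w :: u) ++ z :: x :: v) Y =
        insert (predIn Y w, succIn Y w) (phiAux (u ++ z :: x :: v) (Y.erase w)) := by
      rw [List.cons_append, phiAux_cons' w _ (by simp)]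
    have h2 : phiAux ((w :: u) ++ x :: z :: v) Y =
        insert (predIn Y w, succIn Y w) (phiAux (u ++ x :: z :: v) (Y.erase w)) := by
      rw [List.cons_append, phiAux_cons' w _ (by simp)]
    rw [h1, h2, ih (Y.erase w) (Finset.mem_erase.2 ⟨hxw, hxY⟩) hxu' H0,
      Finset.erase_insert_of_ne hne, Finset.insert_comm]

/-- If `σ = u x z v` and `σ' = u z x v` with `x < z` and `v` contains no letter `y`
with `x < y < z`, then `φ(σ)` and `φ(σ')` differ by exactly one diagonal flip. -/
theorem stmt7 (n : ℕ) (u v : List ℕ) (x z : ℕ) (hxz : x < z)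
    (hl : (u ++ [x, z] ++ v).Perm ((List.range n).map (· + 1)))
    (hv : ∀ y ∈ v, ¬(x < y ∧ y < z)) :
    FlipAdj n (phiT n (u ++ [x, z] ++ v)) (phiT n (u ++ [z, x] ++ v)) := by
  have hW : u ++ [x, z] ++ v = u ++ x :: z :: v := by simp
  have hW' : u ++ [z, x] ++ v = u ++ z :: x :: v := by simp
  rw [hW, hW']
  have hmem : ∀ m, m ∈ u ++ x :: z :: v ↔ 1 ≤ m ∧ m ≤ n := by
    intro m
    rw [← hW, hl.mem_iff]
    simp only [List.mem_map, List.mem_range]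
    constructor
    · rintro ⟨k, hk, rfl⟩; omega
    · rintro ⟨h1, h2⟩; exact ⟨m - 1, by omega, by omega⟩
  have hnd : (u ++ x :: z :: v).Nodup := by
    rw [← hW]
    exact hl.nodup_iff.2 (List.Nodup.map (fun i j h => by omega) List.nodup_range)
  have hdisj := List.disjoint_of_nodup_append hnd
  have hxu : x ∉ u := fun h => hdisj h (by simp)
  have hzu : z ∉ u := fun h => hdisj h (by simp)
  have hxb : 1 ≤ x ∧ x ≤ n := (hmem x).1 (by simp)
  have hzb : 1 ≤ z ∧ z ≤ n := (hmem z).1 (by simp)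
  set Y0 := Finset.range (n + 2) with hY0
  set Yu := u.foldl Finset.erase Y0 with hYudef
  have hYu : ∀ m, m ∈ Yu ↔ m < n + 2 ∧ m ∉ u := by
    intro m
    rw [hYudef, mem_eraseL]
    simp [hY0, Finset.mem_range]
  have h0Y : (0 : ℕ) ∈ Yu := by
    rw [hYu]
    refine ⟨by omega, fun h => ?_⟩
    have := (hmem 0).1 (List.mem_append_left _ h)
    omega
  have hNY : n + 1 ∈ Yu := by
    rw [hYu]
    refine ⟨by omega, fun h => ?_⟩
    have := (hmem (n + 1)).1 (List.mem_append_left _ h)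
    omega
  have hxY : x ∈ Yu := (hYu x).2 ⟨by omega, hxu⟩
  have hzY : z ∈ Yu := (hYu z).2 ⟨by omega, hzu⟩
  have hYuList : ∀ m ∈ Yu, 1 ≤ m → m ≤ n → m = x ∨ m = z ∨ m ∈ v := by
    intro m hm h1 h2
    have hmU := ((hYu m).1 hm).2
    have hmW := (hmem m).2 ⟨h1, h2⟩
    rcases List.mem_append.1 hmW with h | h
    · exact absurd h hmU
    · simp only [List.mem_cons] at h
      tauto
  have hbet : ∀ m ∈ Yu, ¬(x < m ∧ m < z) := by
    rintro m hm ⟨h1, h2⟩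
    rcases hYuList m hm (by omega) (by omega) with h | h | h
    · omega
    · omega
    · exact hv m h ⟨h1, h2⟩
  set a := predIn Yu x with hadef
  obtain ⟨haY, hax, hamax⟩ := predIn_spec
    (⟨0, Finset.mem_filter.2 ⟨h0Y, by omega⟩⟩ : (Yu.filter (· < x)).Nonempty)
  set d := succIn Yu z with hddef
  obtain ⟨hdY, hzd, hdmin⟩ := succIn_spec
    (⟨n + 1, Finset.mem_filter.2 ⟨hNY, by omega⟩⟩ : (Yu.filter (z < ·)).Nonempty)
  have hdle : d ≤ n + 1 := by have := ((hYu d).1 hdY).1; omega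
  have hsx : succIn Yu x = z := by
    apply succIn_eq hzY hxz
    intro q hq hxq
    by_contra hc
    exact hbet q hq ⟨hxq, by omega⟩
  have hpz : predIn Yu z = x := by
    apply predIn_eq hxY hxz
    intro q hq hqz
    by_contra hc
    exact hbet q hq ⟨by omega, hqz⟩
  have he1 : predIn (Yu.erase x) z = a := by
    apply predIn_eq (Finset.mem_erase.2 ⟨by omega, haY⟩) (by omega)
    intro q hq hqz
    obtain ⟨hqx, hqY⟩ := Finset.mem_erase.1 hq
    have hqlex : q ≤ x := by
      by_contra hc
      exact hbet q hqY ⟨by omega, hqz⟩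
    exact hamax q hqY (by omega)
  have he2 : succIn (Yu.erase x) z = d := by
    apply succIn_eq (Finset.mem_erase.2 ⟨by omega, hdY⟩) hzd
    intro q hq hzq
    exact hdmin q (Finset.mem_of_mem_erase hq) hzq
  have he3 : predIn (Yu.erase z) x = a := by
    apply predIn_eq (Finset.mem_erase.2 ⟨by omega, haY⟩) hax
    intro q hq hqx
    exact hamax q (Finset.mem_of_mem_erase hq) hqx
  have he4 : succIn (Yu.erase z) x = d := by
    apply succIn_eq (Finset.mem_erase.2 ⟨by omega, hdY⟩) (by omega)
    intro q hq hxq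
    obtain ⟨hqz, hqY⟩ := Finset.mem_erase.1 hq
    have hqgez : z ≤ q := by
      by_contra hc
      exact hbet q hqY ⟨hxq, by omega⟩
    exact hdmin q hqY (by omega)
  have hz0 : z ≠ 0 := by omega
  have H0 : phiAux (z :: x :: v) Yu =
      insert (x, d) ((phiAux (x :: z :: v) Yu).erase (a, z)) := by
    cases v with
    | nil =>
      rw [phiAux_cons z x [] Yu, hpz, ← hddef, phiAux_cons x z [] Yu, ← hadef, hsx]
      have : phiAux [x] (Yu.erase z) = ∅ := rfl
      rw [this]
      have : phiAux [z] (Yu.erase x) = ∅ := rfl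
      rw [this]
      rw [Finset.erase_insert (by simp)]
    | cons y v' =>
      rw [phiAux_cons z x (y :: v') Yu, hpz, ← hddef,
        phiAux_cons x z (y :: v') Yu, ← hadef, hsx,
        phiAux_cons x y v' (Yu.erase z), he3, he4,
        phiAux_cons z y v' (Yu.erase x), he1, he2,
        (Finset.erase_right_comm : (Yu.erase z).erase x = (Yu.erase x).erase z)]
      have hnm : (a, z) ∉ insert (a, d) (phiAux (y :: v') ((Yu.erase x).erase z)) := by
        intro h
        rcases Finset.mem_insert.1 h with h | h
        · have := (Prod.ext_iff.1 h).2; omega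
        · exact not_mem_phiAux_snd hz0 (y :: v') _
            (fun hc => (Finset.mem_erase.1 hc).1 rfl) a h
      rw [Finset.erase_insert hnm]
  have hE := key_eq v x z a d hax hxz u Y0 (by rw [hY0, Finset.mem_range]; omega) hxu
    (by rw [← hYudef]; exact H0)
  have hGood : GoodP Yu (phiAux (u ++ x :: z :: v) Y0) := by
    rw [hYudef]
    exact good_chain (x :: z :: v) (by simp) u Y0 (good_base n _) (subset_refl _)
  set T := phiAux (u ++ x :: z :: v) Y0 with hTdef
  have hsub := phiAux_suffix_subset (x :: z :: v) u Y0
  rw [← hYudef, ← hTdef] at hsub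
  have hazT : (a, z) ∈ T := by
    apply hsub
    rw [phiAux_cons x z v Yu, ← hadef, hsx]
    exact Finset.mem_insert_self _ _
  have hExz : IsEdge n T x z := by
    refine ⟨hxz, by omega, ?_⟩
    rcases hGood x z hxY hzY hxz hbet with h | h
    · exact Or.inl h
    · exact Or.inr (Or.inr h)
  have hEax : IsEdge n T a x := by
    refine ⟨hax, by omega, ?_⟩
    have hgap : ∀ w ∈ Yu, ¬(a < w ∧ w < x) := by
      rintro w hw ⟨h1, h2⟩
      exact absurd (hamax w hw h2) (by omega)
    rcases hGood a x haY hxY hax hgap with h | h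
    · exact Or.inl h
    · exact Or.inr (Or.inr h)
  have hEzd : IsEdge n T z d := by
    refine ⟨hzd, hdle, ?_⟩
    have hgap : ∀ w ∈ Yu, ¬(z < w ∧ w < d) := by
      rintro w hw ⟨h1, h2⟩
      exact absurd (hdmin w hw h1) (by omega)
    rcases hGood z d hzY hdY hzd hgap with h | h
    · exact Or.inl h
    · exact Or.inr (Or.inr h)
  have hEaz : IsEdge n T a z := ⟨by omega, by omega, Or.inr (Or.inr hazT)⟩
  have hEad : IsEdge n T a d := by
    cases v with
    | nil =>
      have ha0 : a = 0 := by
        by_contra hc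
        rcases hYuList a haY (by omega) (by omega) with h | h | h
        · omega
        · omega
        · simp at h
      have hdn : d = n + 1 := by
        by_contra hc
        rcases hYuList d hdY (by omega) (by omega) with h | h | h
        · omega
        · omega
        · simp at h
      exact ⟨by omega, by omega, Or.inr (Or.inl ⟨ha0, hdn⟩)⟩
    | cons y v' =>
      have hadT : (a, d) ∈ T := by
        apply hsub
        rw [phiAux_cons x z (y :: v') Yu, phiAux_cons z y v' (Yu.erase x), he1, he2]
        exact Finset.mem_insert_of_mem (Finset.mem_insert_self _ _)
      exact ⟨by omega, hdle, Or.inr (Or.inr hadT)⟩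
  refine ⟨a, x, z, d, hax, hxz, hzd, Or.inr ?_⟩
  refine ⟨⟨hax, hxz, hEax, hExz, hEaz⟩, ⟨by omega, hzd, hEaz, hEzd, hEad⟩, ?_⟩
  show phiAux (u ++ z :: x :: v) Y0 = insert (x, d) (T.erase (a, z))
  exact hE
end

section
/- Two permutations σ_1, σ_2 ∈ S_n satisfy φ(σ_1) = φ(σ_2) if and only if σ_1 and σ_2 are sylvester congruent. -/
open scoped Classical

namespace Stmt10Aux

/-! ### Basic facts about `predIn` and `succIn` -/

lemma predIn_spec {Y : Finset ℕ} {v b : ℕ} (hb : b ∈ Y) (hbv : b < v) :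
    predIn Y v ∈ Y ∧ predIn Y v < v ∧ ∀ w ∈ Y, w < v → w ≤ predIn Y v := by
  have hS : (Y.filter (· < v)).Nonempty := ⟨b, Finset.mem_filter.2 ⟨hb, hbv⟩⟩
  have hval : predIn Y v = (Y.filter (· < v)).max' hS := by
    rw [predIn, ← Finset.coe_max' hS, WithBot.unbotD_coe]
  have hmem := Finset.max'_mem _ hS
  rw [Finset.mem_filter] at hmem
  refine ⟨by rw [hval]; exact hmem.1, by rw [hval]; exact hmem.2, ?_⟩
  intro w hw hwv
  rw [hval]
  exact Finset.le_max' (Y.filter (· < v)) w (Finset.mem_filter.2 ⟨hw, hwv⟩)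

lemma succIn_spec {Y : Finset ℕ} {v b : ℕ} (hb : b ∈ Y) (hbv : v < b) :
    succIn Y v ∈ Y ∧ v < succIn Y v ∧ ∀ w ∈ Y, v < w → succIn Y v ≤ w := by
  have hS : (Y.filter (v < ·)).Nonempty := ⟨b, Finset.mem_filter.2 ⟨hb, hbv⟩⟩
  have hval : succIn Y v = (Y.filter (v < ·)).min' hS := by
    rw [succIn, ← Finset.coe_min' hS, WithTop.untopD_coe]
  have hmem := Finset.min'_mem _ hS
  rw [Finset.mem_filter] at hmem
  refine ⟨by rw [hval]; exact hmem.1, by rw [hval]; exact hmem.2, ?_⟩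
  intro w hw hwv
  rw [hval]
  exact Finset.min'_le (Y.filter (v < ·)) w (Finset.mem_filter.2 ⟨hw, hwv⟩)

lemma predIn_eq_of_subset {Y Y' : Finset ℕ} {v b : ℕ} (hsub : Y' ⊆ Y) (hb : b ∈ Y')
    (hbv : b < v) (hmem : predIn Y v ∈ Y') : predIn Y' v = predIn Y v := by
  obtain ⟨hm', hlt', hmax'⟩ := predIn_spec hb hbv
  obtain ⟨hm, hlt, hmax⟩ := predIn_spec (hsub hb) hbv
  exact le_antisymm (hmax _ (hsub hm') hlt') (hmax' _ hmem hlt)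

lemma succIn_eq_of_subset {Y Y' : Finset ℕ} {v b : ℕ} (hsub : Y' ⊆ Y) (hb : b ∈ Y')
    (hbv : v < b) (hmem : succIn Y v ∈ Y') : succIn Y' v = succIn Y v := by
  obtain ⟨hm', hlt', hmin'⟩ := succIn_spec hb hbv
  obtain ⟨hm, hlt, hmin⟩ := succIn_spec (hsub hb) hbv
  exact le_antisymm (hmin' _ hmem hlt) (hmin _ (hsub hm') hlt')

lemma between_eq {Y : Finset ℕ} {lo hi v w : ℕ} (hlo : lo ∈ Y) (hhi : hi ∈ Y)
    (hlov : lo < v) (hvhi : v < hi) (hw : w ∈ Y)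
    (h1 : predIn Y v < w) (h2 : w < succIn Y v) : w = v := by
  rcases lt_trichotomy w v with h | h | h
  · exact absurd ((predIn_spec hlo hlov).2.2 w hw h) (not_le.2 h1)
  · exact h
  · exact absurd ((succIn_spec hhi hvhi).2.2 w hw h) (not_le.2 h2)

lemma phiAux_cons (v b : ℕ) (t : List ℕ) (Y : Finset ℕ) :
    phiAux (v :: b :: t) Y =
      insert (predIn Y v, succIn Y v) (phiAux (b :: t) (Y.erase v)) := rfl

/-! ### Pairs produced by `phiAux` -/

lemma phiAux_pair {lo hi : ℕ} : ∀ (l : List ℕ) (Y : Finset ℕ), lo ∈ Y → hi ∈ Y →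
    (∀ a ∈ l, a ∈ Y ∧ lo < a ∧ a < hi) → l.Nodup →
    ∀ c d : ℕ, (c, d) ∈ phiAux l Y → c ∈ Y ∧ d ∈ Y ∧ ∃ u ∈ l, c < u ∧ u < d := by
  intro l
  induction l with
  | nil => intro Y _ _ _ _ c d hm; simp [phiAux] at hm
  | cons v t ih =>
    intro Y hlo hhi hlet hnd c d hm
    cases t with
    | nil => simp [phiAux] at hm
    | cons b t' =>
      rw [phiAux_cons, Finset.mem_insert] at hm
      obtain ⟨hvY, hlov, hvhi⟩ := hlet v (by simp)
      rcases hm with he | hm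
      · obtain ⟨hc, hd⟩ := Prod.mk.injEq .. ▸ he
        subst hc; subst hd
        exact ⟨(predIn_spec hlo hlov).1, (succIn_spec hhi hvhi).1,
          v, by simp, (predIn_spec hlo hlov).2.1, (succIn_spec hhi hvhi).2.1⟩
      · have hlo' : lo ∈ Y.erase v := Finset.mem_erase.2 ⟨Nat.ne_of_lt hlov, hlo⟩
        have hhi' : hi ∈ Y.erase v := Finset.mem_erase.2 ⟨(Nat.ne_of_lt hvhi).symm, hhi⟩
        have hvnot : v ∉ b :: t' := (List.nodup_cons.1 hnd).1
        have hlet' : ∀ a ∈ b :: t', a ∈ Y.erase v ∧ lo < a ∧ a < hi := by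
          intro a ha
          obtain ⟨h1, h2, h3⟩ := hlet a (List.mem_cons_of_mem _ ha)
          exact ⟨Finset.mem_erase.2 ⟨fun h => hvnot (h ▸ ha), h1⟩, h2, h3⟩
        obtain ⟨hc, hd, u, hu, hcu, hud⟩ :=
          ih (Y.erase v) hlo' hhi' hlet' (List.nodup_cons.1 hnd).2 c d hm
        exact ⟨Finset.erase_subset _ _ hc, Finset.erase_subset _ _ hd,
          u, List.mem_cons_of_mem _ hu, hcu, hud⟩

/-! ### Sylvester congruence helpers -/

lemma sylvAdj_cons {r r' : List ℕ} (c : ℕ) (h : SylvAdj r r') : SylvAdj (c :: r) (c :: r') := by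
  obtain ⟨u, u', u'', x, y, z, h1, h2, e1, e2⟩ := h
  exact ⟨c :: u, u', u'', x, y, z, h1, h2, by simp [e1], by simp [e2]⟩

lemma sylvCong_cons {r r' : List ℕ} (c : ℕ) (h : SylvCong r r') : SylvCong (c :: r) (c :: r') := by
  induction h with
  | rel a b hab => exact Relation.EqvGen.rel _ _ (sylvAdj_cons c hab)
  | refl a => exact Relation.EqvGen.refl _
  | symm a b _ ihr => exact Relation.EqvGen.symm _ _ ihr
  | trans a b c' _ _ ih1 ih2 => exact Relation.EqvGen.trans _ _ _ ih1 ih2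

lemma sylvAdj_perm {w1 w2 : List ℕ} (h : SylvAdj w1 w2) : w1.Perm w2 := by
  obtain ⟨u, u', u'', x, y, z, _, _, e1, e2⟩ := h
  rw [e1, e2]
  exact (List.Perm.swap z x _).append_left u

lemma sylvCong_perm {w1 w2 : List ℕ} (h : SylvCong w1 w2) : w1.Perm w2 := by
  induction h with
  | rel a b hab => exact sylvAdj_perm hab
  | refl a => exact List.Perm.refl _
  | symm a b _ ihr => exact ihr.symm
  | trans a b c _ _ ih1 ih2 => exact ih1.trans ih2

/-! ### The bubbling lemma -/

lemma bubble {lo hi : ℕ} : ∀ (l : List ℕ) (Y : Finset ℕ) (v : ℕ),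
    lo ∈ Y → hi ∈ Y →
    (∀ a, a ∈ l ↔ a ∈ Y ∧ lo < a ∧ a < hi) → l.Nodup → v ∈ l →
    (predIn Y v, succIn Y v) ∈ phiAux l Y →
    SylvCong l (v :: l.erase v) := by
  intro l
  induction l with
  | nil => intro Y v _ _ _ _ hv _; simp at hv
  | cons a t ih =>
    intro Y v hlo hhi hl hnd hv hmem
    by_cases hav : a = v
    · subst hav
      rw [List.erase_cons_head]
      exact Relation.EqvGen.refl _
    have hvt : v ∈ t := by rcases List.mem_cons.1 hv with h | h; exact absurd h.symm hav; exact h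
    obtain ⟨hvY, hlov, hvhi⟩ := (hl v).1 hv
    obtain ⟨haY, hloa, hahi⟩ := (hl a).1 (by simp)
    cases t with
    | nil => simp at hvt
    | cons b t' =>
      rw [phiAux_cons, Finset.mem_insert] at hmem
      have hanott : a ∉ b :: t' := (List.nodup_cons.1 hnd).1
      have hndt : (b :: t').Nodup := (List.nodup_cons.1 hnd).2
      rcases hmem with he | hmem
      · -- the head pair: forces a = v, contradiction
        obtain ⟨hc, hd⟩ := Prod.mk.injEq .. ▸ he
        exact absurd (between_eq hlo hhi hlov hvhi haY
          (hc ▸ (predIn_spec hlo hloa).2.1) (hd ▸ (succIn_spec hhi hahi).2.1)) hav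
      · have hlo' : lo ∈ Y.erase a := Finset.mem_erase.2 ⟨Nat.ne_of_lt hloa, hlo⟩
        have hhi' : hi ∈ Y.erase a := Finset.mem_erase.2 ⟨(Nat.ne_of_lt hahi).symm, hhi⟩
        have hlet' : ∀ x ∈ b :: t', x ∈ Y.erase a ∧ lo < x ∧ x < hi := by
          intro x hx
          obtain ⟨h1, h2, h3⟩ := (hl x).1 (List.mem_cons_of_mem _ hx)
          exact ⟨Finset.mem_erase.2 ⟨fun h => hanott (h ▸ hx), h1⟩, h2, h3⟩
        -- both coordinates of the pair are in Y.erase a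
        obtain ⟨hpmem, hsmem, _⟩ :=
          phiAux_pair (lo := lo) (hi := hi) (b :: t') (Y.erase a) hlo' hhi' hlet' hndt _ _ hmem
        have hpa : predIn Y v ≠ a := (Finset.mem_erase.1 hpmem).1
        have hsa : succIn Y v ≠ a := (Finset.mem_erase.1 hsmem).1
        have hpred : predIn (Y.erase a) v = predIn Y v :=
          predIn_eq_of_subset (Finset.erase_subset _ _) hlo' hlov hpmem
        have hsucc : succIn (Y.erase a) v = succIn Y v :=
          succIn_eq_of_subset (Finset.erase_subset _ _) hhi' hvhi hsmem
        have hl' : ∀ x, x ∈ b :: t' ↔ x ∈ Y.erase a ∧ lo < x ∧ x < hi := by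
          intro x
          constructor
          · exact hlet' x
          · rintro ⟨hx1, hx2, hx3⟩
            have : x ∈ a :: b :: t' := (hl x).2 ⟨Finset.mem_of_mem_erase hx1, hx2, hx3⟩
            rcases List.mem_cons.1 this with h | h
            · exact absurd h.symm (Finset.mem_erase.1 hx1).1.symm
            · exact h
        have hrec : SylvCong (b :: t') (v :: (b :: t').erase v) := by
          apply ih (Y.erase a) v hlo' hhi' hl' hndt hvt
          rw [hpred, hsucc]; exact hmem
        have hstep1 : SylvCong (a :: b :: t') (a :: v :: (b :: t').erase v) :=
          sylvCong_cons a hrec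
        -- now the swap of a and v at the front
        have hterase : (a :: b :: t').erase v = a :: (b :: t').erase v :=
          List.erase_cons_tail (by simp [hav])
        rcases lt_or_gt_of_ne (fun h => hav h.symm) with hva | hva
        · -- v < a : use y = succIn Y v
          set y := succIn Y v with hy
          have hsy : succIn Y v ∈ Y ∧ v < succIn Y v ∧ _ := succIn_spec hhi hvhi
          have hya : y < a := lt_of_le_of_ne (hsy.2.2 a haY hva) hsa
          have hyl : y ∈ a :: b :: t' := (hl y).2 ⟨hsy.1, lt_trans hlov hsy.2.1,
            lt_trans hya hahi⟩
          have hyt : y ∈ (b :: t').erase v := by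
            rw [List.mem_erase_of_ne (Nat.ne_of_gt hsy.2.1)]
            rcases List.mem_cons.1 hyl with h | h
            · exact absurd h (Nat.ne_of_lt hya)
            · exact h
          obtain ⟨s1, s2, hs⟩ := List.append_of_mem hyt
          have hadj : SylvAdj (v :: a :: (b :: t').erase v) (a :: v :: (b :: t').erase v) :=
            ⟨[], s1, s2, v, y, a, le_of_lt hsy.2.1, hya, by simp [hs], by simp [hs]⟩
          refine Relation.EqvGen.trans _ _ _ hstep1 ?_
          rw [hterase]
          exact Relation.EqvGen.symm _ _ (Relation.EqvGen.rel _ _ hadj)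
        · -- a < v : use y = predIn Y v
          set y := predIn Y v with hy
          have hpy : predIn Y v ∈ Y ∧ predIn Y v < v ∧ _ := predIn_spec hlo hlov
          have hay : a < y := lt_of_le_of_ne (hpy.2.2 a haY hva) (Ne.symm hpa)
          have hyl : y ∈ a :: b :: t' := (hl y).2 ⟨hpy.1, lt_trans hloa hay,
            lt_trans hpy.2.1 hvhi⟩
          have hyt : y ∈ (b :: t').erase v := by
            rw [List.mem_erase_of_ne (Nat.ne_of_lt hpy.2.1)]
            rcases List.mem_cons.1 hyl with h | h
            · exact absurd h (Nat.ne_of_gt hay)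
            · exact h
          obtain ⟨s1, s2, hs⟩ := List.append_of_mem hyt
          have hadj : SylvAdj (a :: v :: (b :: t').erase v) (v :: a :: (b :: t').erase v) :=
            ⟨[], s1, s2, a, y, v, le_of_lt hay, hpy.2.1, by simp [hs], by simp [hs]⟩
          refine Relation.EqvGen.trans _ _ _ hstep1 ?_
          rw [hterase]
          exact Relation.EqvGen.rel _ _ hadj

/-! ### Sylvester-adjacent words have the same image -/

lemma phiAux_swap {lo hi : ℕ} (x y z : ℕ) (u' u'' : List ℕ) (hxy : x ≤ y) (hyz : y < z) :
    ∀ (u : List ℕ) (Y : Finset ℕ), lo ∈ Y → hi ∈ Y →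
    (∀ a ∈ u ++ x :: z :: (u' ++ y :: u''), a ∈ Y ∧ lo < a ∧ a < hi) →
    (u ++ x :: z :: (u' ++ y :: u'')).Nodup →
    phiAux (u ++ x :: z :: (u' ++ y :: u'')) Y = phiAux (u ++ z :: x :: (u' ++ y :: u'')) Y := by
  intro u
  induction u with
  | nil =>
    intro Y hlo hhi hlet hnd
    simp only [List.nil_append] at *
    obtain ⟨hxY, hlox, hxhi⟩ := hlet x (by simp)
    obtain ⟨hzY, hloz, hzhi⟩ := hlet z (by simp)
    obtain ⟨hyY, hloy, hyhi⟩ := hlet y (by simp)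
    have hxny : x ≠ y := by
      intro h; subst h
      exact (List.nodup_cons.1 hnd).1 (by simp)
    have hxy' : x < y := lt_of_le_of_ne hxy hxny
    have hxz : x < z := lt_trans hxy' hyz
    have hyx : y ∈ Y.erase x := Finset.mem_erase.2 ⟨Nat.ne_of_gt hxy', hyY⟩
    have hyz' : y ∈ Y.erase z := Finset.mem_erase.2 ⟨Nat.ne_of_lt hyz, hyY⟩
    have hlox' : lo ∈ Y.erase x := Finset.mem_erase.2 ⟨Nat.ne_of_lt hlox, hlo⟩
    have hloz' : lo ∈ Y.erase z := Finset.mem_erase.2 ⟨Nat.ne_of_lt hloz, hlo⟩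
    have hhix' : hi ∈ Y.erase x := Finset.mem_erase.2 ⟨(Nat.ne_of_lt hxhi).symm, hhi⟩
    have hhiz' : hi ∈ Y.erase z := Finset.mem_erase.2 ⟨(Nat.ne_of_lt hzhi).symm, hhi⟩
    -- pred/succ stability
    have e1 : predIn (Y.erase z) x = predIn Y x := by
      apply predIn_eq_of_subset (Finset.erase_subset _ _) hloz' hlox
      exact Finset.mem_erase.2 ⟨Nat.ne_of_lt (lt_trans (predIn_spec hlo hlox).2.1 hxz),
        (predIn_spec hlo hlox).1⟩
    have e2 : succIn (Y.erase z) x = succIn Y x := by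
      apply succIn_eq_of_subset (Finset.erase_subset _ _) hyz'
        hxy'
      refine Finset.mem_erase.2 ⟨Nat.ne_of_lt (lt_of_le_of_lt ?_ hyz), (succIn_spec hyY hxy').1⟩
      exact (succIn_spec hyY hxy').2.2 y hyY hxy'
    have e3 : predIn (Y.erase x) z = predIn Y z := by
      apply predIn_eq_of_subset (Finset.erase_subset _ _) hyx hyz
      refine Finset.mem_erase.2 ⟨Nat.ne_of_gt (lt_of_lt_of_le hxy' ?_), (predIn_spec hyY hyz).1⟩
      exact (predIn_spec hyY hyz).2.2 y hyY hyz
    have e4 : succIn (Y.erase x) z = succIn Y z := by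
      apply succIn_eq_of_subset (Finset.erase_subset _ _) hhix' hzhi
      exact Finset.mem_erase.2 ⟨Nat.ne_of_gt (lt_trans hxz (succIn_spec hhi hzhi).2.1),
        (succIn_spec hhi hzhi).1⟩
    have hne : (u' ++ y :: u'') ≠ [] := by simp
    obtain ⟨c, r, hcr⟩ := List.exists_cons_of_ne_nil hne
    rw [hcr, phiAux_cons, phiAux_cons, phiAux_cons, phiAux_cons,
      e1, e2, e3, e4, Finset.erase_right_comm, Finset.insert_comm]
  | cons c u0 ihu =>
    intro Y hlo hhi hlet hnd
    obtain ⟨hcY, hloc, hchi⟩ := hlet c (by simp)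
    have hne1 : (u0 ++ x :: z :: (u' ++ y :: u'')) ≠ [] := by simp
    have hne2 : (u0 ++ z :: x :: (u' ++ y :: u'')) ≠ [] := by simp
    obtain ⟨c1, r1, hcr1⟩ := List.exists_cons_of_ne_nil hne1
    obtain ⟨c2, r2, hcr2⟩ := List.exists_cons_of_ne_nil hne2
    rw [List.cons_append, hcr1, phiAux_cons, ← hcr1]
    rw [show ((c :: u0) ++ z :: x :: (u' ++ y :: u'')) = c :: (u0 ++ z :: x :: (u' ++ y :: u'')) from rfl,
      hcr2, phiAux_cons, ← hcr2]
    congr 1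
    apply ihu (Y.erase c)
    · exact Finset.mem_erase.2 ⟨Nat.ne_of_lt hloc, hlo⟩
    · exact Finset.mem_erase.2 ⟨(Nat.ne_of_lt hchi).symm, hhi⟩
    · intro a ha
      obtain ⟨h1, h2, h3⟩ := hlet a (by simp [ha])
      refine ⟨Finset.mem_erase.2 ⟨?_, h1⟩, h2, h3⟩
      intro h; subst h
      exact (List.nodup_cons.1 (by simpa using hnd)).1 ha
    · exact (List.nodup_cons.1 (by simpa using hnd)).2

lemma phiAux_sylvAdj {lo hi : ℕ} {w1 w2 : List ℕ} (Y : Finset ℕ) (hlo : lo ∈ Y) (hhi : hi ∈ Y)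
    (hlet : ∀ a ∈ w1, a ∈ Y ∧ lo < a ∧ a < hi) (hnd : w1.Nodup) (h : SylvAdj w1 w2) :
    phiAux w1 Y = phiAux w2 Y := by
  obtain ⟨u, u', u'', x, y, z, h1, h2, e1, e2⟩ := h
  subst e1; subst e2
  exact phiAux_swap x y z u' u'' h1 h2 u Y hlo hhi hlet hnd

lemma phiAux_sylvCong {lo hi : ℕ} {w1 w2 : List ℕ} (Y : Finset ℕ) (hlo : lo ∈ Y) (hhi : hi ∈ Y)
    (h : SylvCong w1 w2) :
    (∀ a ∈ w1, a ∈ Y ∧ lo < a ∧ a < hi) → w1.Nodup →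
    phiAux w1 Y = phiAux w2 Y := by
  induction h with
  | rel a b hab =>
    exact fun hlet hnd => phiAux_sylvAdj Y hlo hhi hlet hnd hab
  | refl a => exact fun _ _ => rfl
  | symm a b hab ihr =>
    intro hlet hnd
    have hperm := sylvCong_perm hab
    exact (ihr (fun x hx => hlet x (hperm.mem_iff.1 hx)) (hperm.nodup_iff.2 hnd)).symm
  | trans a b c hab hbc ih1 ih2 =>
    intro hlet hnd
    have hperm := sylvCong_perm hab
    exact (ih1 hlet hnd).trans
      (ih2 (fun x hx => hlet x (hperm.mem_iff.2 hx)) (hperm.nodup_iff.1 hnd))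

/-! ### The hard direction -/

lemma insert_cancel {α : Type*} [DecidableEq α] {a : α} {s t : Finset α}
    (hs : a ∉ s) (ht : a ∉ t) (h : insert a s = insert a t) : s = t := by
  rw [← Finset.erase_insert hs, h, Finset.erase_insert ht]

lemma main {lo hi : ℕ} : ∀ (l2 l1 : List ℕ) (Y : Finset ℕ),
    lo ∈ Y → hi ∈ Y →
    (∀ a, a ∈ l1 ↔ a ∈ Y ∧ lo < a ∧ a < hi) →
    (∀ a, a ∈ l2 ↔ a ∈ Y ∧ lo < a ∧ a < hi) →
    l1.Nodup → l2.Nodup →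
    phiAux l1 Y = phiAux l2 Y → SylvCong l1 l2 := by
  intro l2
  induction l2 with
  | nil =>
    intro l1 Y _ _ hl1 hl2 _ _ _
    have : l1 = [] := List.eq_nil_iff_forall_not_mem.2 fun a ha =>
      (by simpa using (hl2 a).2 ((hl1 a).1 ha))
    rw [this]; exact Relation.EqvGen.refl _
  | cons h t2 ih =>
    intro l1 Y hlo hhi hl1 hl2 hnd1 hnd2 heq
    have hht : h ∉ t2 := (List.nodup_cons.1 hnd2).1
    have hndt2 : t2.Nodup := (List.nodup_cons.1 hnd2).2
    have hhY := (hl2 h).1 (by simp)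
    have hh1 : h ∈ l1 := (hl1 h).2 hhY
    have hl2' : ∀ a, a ∈ t2 ↔ a ∈ Y.erase h ∧ lo < a ∧ a < hi := by
      intro a
      constructor
      · intro ha
        obtain ⟨h1, h2, h3⟩ := (hl2 a).1 (List.mem_cons_of_mem _ ha)
        exact ⟨Finset.mem_erase.2 ⟨fun hc => hht (hc ▸ ha), h1⟩, h2, h3⟩
      · rintro ⟨h1, h2, h3⟩
        have := (hl2 a).2 ⟨Finset.mem_of_mem_erase h1, h2, h3⟩
        rcases List.mem_cons.1 this with hc | hc
        · exact absurd hc (Finset.mem_erase.1 h1).1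
        · exact hc
    have hl1' : ∀ a, a ∈ l1.erase h ↔ a ∈ Y.erase h ∧ lo < a ∧ a < hi := by
      intro a
      rw [hnd1.mem_erase_iff, hl1 a, Finset.mem_erase]
      tauto
    cases t2 with
    | nil =>
      -- l1 and l2 are both the single word [h]
      have hl1h : l1 = [h] := by
        cases l1 with
        | nil => simp at hh1
        | cons c r =>
          have hch : c = h := by
            have := (hl2 c).2 ((hl1 c).1 (by simp))
            simpa using this
          subst hch
          have : r = [] := List.eq_nil_iff_forall_not_mem.2 fun a ha => by
            have hac : a ∈ c :: r := List.mem_cons_of_mem _ ha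
            have : a = c := by simpa using (hl2 a).2 ((hl1 a).1 hac)
            exact (List.nodup_cons.1 hnd1).1 (this ▸ ha)
          rw [this]
      rw [hl1h]; exact Relation.EqvGen.refl _
    | cons b t2' =>
      have hlo' : lo ∈ Y.erase h := Finset.mem_erase.2 ⟨Nat.ne_of_lt hhY.2.1, hlo⟩
      have hhi' : hi ∈ Y.erase h := Finset.mem_erase.2 ⟨(Nat.ne_of_lt hhY.2.2).symm, hhi⟩
      have hP : (predIn Y h, succIn Y h) ∈ phiAux l1 Y := by
        rw [heq, phiAux_cons]; exact Finset.mem_insert_self _ _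
      have hbub : SylvCong l1 (h :: l1.erase h) :=
        bubble l1 Y h hlo hhi hl1 hnd1 hh1 hP
      have heq2 : phiAux l1 Y = phiAux (h :: l1.erase h) Y :=
        phiAux_sylvCong Y hlo hhi hbub (fun a ha => (hl1 a).1 ha) hnd1
      -- l1.erase h is nonempty: b is in it
      have hb1 : b ∈ l1.erase h := (hl1' b).2 ((hl2' b).1 (by simp))
      have hform : ∃ c r, l1.erase h = c :: r := by
        cases he : l1.erase h with
        | nil => rw [he] at hb1; simp at hb1
        | cons c r => exact ⟨c, r, rfl⟩
      obtain ⟨c, r, hcr⟩ := hform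
      have heq3 : insert (predIn Y h, succIn Y h) (phiAux (l1.erase h) (Y.erase h)) =
          insert (predIn Y h, succIn Y h) (phiAux (b :: t2') (Y.erase h)) := by
        rw [← phiAux_cons h b t2' Y, ← heq, heq2, hcr, phiAux_cons, ← hcr]
      have hnotmem : ∀ (w : List ℕ), (∀ a, a ∈ w ↔ a ∈ Y.erase h ∧ lo < a ∧ a < hi) →
          w.Nodup → (predIn Y h, succIn Y h) ∉ phiAux w (Y.erase h) := by
        intro w hw hwnd hmem
        obtain ⟨_, _, u, hu, hcu, hud⟩ :=
          phiAux_pair (lo := lo) (hi := hi) w (Y.erase h) hlo' hhi'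
            (fun a ha => (hw a).1 ha) hwnd _ _ hmem
        obtain ⟨huY, _, _⟩ := (hw u).1 hu
        have : u = h := between_eq hlo hhi hhY.2.1 hhY.2.2 (Finset.mem_of_mem_erase huY) hcu hud
        exact (Finset.mem_erase.1 huY).1 this
      have heq4 : phiAux (l1.erase h) (Y.erase h) = phiAux (b :: t2') (Y.erase h) :=
        insert_cancel (hnotmem _ hl1' (hnd1.erase h)) (hnotmem _ hl2' hndt2) heq3
      have hrec : SylvCong (l1.erase h) (b :: t2') :=
        ih (l1.erase h) (Y.erase h) hlo' hhi' hl1' hl2' (hnd1.erase h) hndt2 heq4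
      exact Relation.EqvGen.trans _ _ _ hbub (sylvCong_cons h hrec)

end Stmt10Aux

/-- Two permutations `σ_1, σ_2 ∈ S_n` satisfy `φ(σ_1) = φ(σ_2)` if and only if
they are sylvester congruent. -/
theorem stmt10 (n : ℕ) (l1 l2 : List ℕ)
    (h1 : l1.Perm ((List.range n).map (· + 1)))
    (h2 : l2.Perm ((List.range n).map (· + 1))) :
    phiT n l1 = phiT n l2 ↔ SylvCong l1 l2 := by
  have hmem1 : ∀ a, a ∈ l1 ↔ a ∈ Finset.range (n + 2) ∧ 0 < a ∧ a < n + 1 := by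
    intro a
    rw [h1.mem_iff]
    simp only [List.mem_map, List.mem_range, Finset.mem_range]
    constructor
    · rintro ⟨i, hi, rfl⟩; omega
    · intro h; exact ⟨a - 1, by omega, by omega⟩
  have hmem2 : ∀ a, a ∈ l2 ↔ a ∈ Finset.range (n + 2) ∧ 0 < a ∧ a < n + 1 := by
    intro a
    rw [h2.mem_iff]
    simp only [List.mem_map, List.mem_range, Finset.mem_range]
    constructor
    · rintro ⟨i, hi, rfl⟩; omega
    · intro h; exact ⟨a - 1, by omega, by omega⟩
  have hndtgt : ((List.range n).map (· + 1)).Nodup :=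
    List.nodup_range.map (fun a b => by omega)
  have hnd1 : l1.Nodup := h1.nodup_iff.2 hndtgt
  have hnd2 : l2.Nodup := h2.nodup_iff.2 hndtgt
  have hlo : (0 : ℕ) ∈ Finset.range (n + 2) := by simp
  have hhi : (n + 1) ∈ Finset.range (n + 2) := by simp
  constructor
  · intro heq
    exact Stmt10Aux.main l2 l1 (Finset.range (n + 2)) hlo hhi hmem1 hmem2 hnd1 hnd2 heq
  · intro hc
    exact Stmt10Aux.phiAux_sylvCong (Finset.range (n + 2)) hlo hhi hc
      (fun a ha => (hmem1 a).1 ha) hnd1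
end
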